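/- For m ≥ 1 and all n, the coefficient λ_{n,m} of z^m in Φ_n^* satisfies λ_{n,m} = ∑ over all ordered compositions (a_1,…,a_j) of m into positive parts, and all integer tuples (k_1,…,k_j) with k_1 < n and k_{i+1} < k_i − a_i for each i, of the product α_{k_1}·conj(α_{k_1−a_1})·⋯·α_{k_j}·conj(α_{k_j−a_j}), using the conventions α_{−1} = −1 and α_k = 0 for k ≤ −2. -/

import Mathlib

open Polynomial

namespace LambdaAux


abbrev Idx := Σ j : ℕ, (Fin (j + 1) → ℕ) × (Fin (j + 1) → ℤ)

noncomputable def fterm (α : ℤ → ℂ) (N : ℤ) (m : ℕ) (p : Idx) : ℂ :=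
  if (∀ i, 1 ≤ p.2.1 i) ∧ (∑ i, p.2.1 i) = m ∧ p.2.2 0 < N ∧
      (∀ i : Fin p.1, p.2.2 i.succ < p.2.2 i.castSucc - (p.2.1 i.castSucc : ℤ))
  then ∏ i, α (p.2.2 i) * (starRingEnd ℂ) (α (p.2.2 i - (p.2.1 i : ℤ)))
  else 0

noncomputable def T (α : ℤ → ℂ) (N : ℤ) (m : ℕ) : ℂ := ∑' p : Idx, fterm α N m p

noncomputable def bigset (N : ℤ) (m : ℕ) : Finset Idx :=
  (Finset.range m).sigma fun j =>
    (Fintype.piFinset fun _ : Fin (j+1) => Finset.Icc 1 m) ×ˢ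
    (Fintype.piFinset fun _ : Fin (j+1) => Finset.Icc (-1 : ℤ) (N - 1))

variable {α : ℤ → ℂ}

lemma support_aux (hm2 : ∀ k : ℤ, k ≤ -2 → α k = 0) {N : ℤ} {m : ℕ} {p : Idx}
    (h1 : ∀ i, 1 ≤ p.2.1 i) (h2 : (∑ i, p.2.1 i) = m) (h3 : p.2.2 0 < N)
    (h4 : ∀ i : Fin p.1, p.2.2 i.succ < p.2.2 i.castSucc - (p.2.1 i.castSucc : ℤ))
    (h5 : (∏ i, α (p.2.2 i) * (starRingEnd ℂ) (α (p.2.2 i - (p.2.1 i : ℤ)))) ≠ 0) :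
    p ∈ bigset N m := by
  obtain ⟨j, a, k⟩ := p
  simp only at h1 h2 h3 h4 h5
  have hfac : ∀ i : Fin (j+1), α (k i) * (starRingEnd ℂ) (α (k i - (a i : ℤ))) ≠ 0 := by
    intro i hi
    exact h5 (Finset.prod_eq_zero (Finset.mem_univ i) hi)
  have hk1 : ∀ i : Fin (j+1), -1 ≤ k i := by
    intro i
    by_contra h
    exact hfac i (by rw [hm2 (k i) (by omega)]; ring)
  have hkN : ∀ i : Fin (j+1), k i < N := by
    intro i
    induction i using Fin.induction with
    | zero => exact h3
    | succ i ih =>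
        have hc := h4 i
        have ha := h1 i.castSucc
        omega
  have haM : ∀ i : Fin (j+1), a i ≤ m := by
    intro i
    rw [← h2]
    exact Finset.single_le_sum (f := a) (fun i _ => Nat.zero_le _) (Finset.mem_univ i)
  have hjm : j + 1 ≤ m := by
    rw [← h2]
    calc j + 1 = ∑ _i : Fin (j+1), 1 := by simp
    _ ≤ ∑ i, a i := Finset.sum_le_sum fun i _ => h1 i
  simp only [bigset, Finset.mem_sigma, Finset.mem_range, Finset.mem_product,
    Fintype.mem_piFinset, Finset.mem_Icc]
  refine ⟨by omega, fun i => ⟨h1 i, haM i⟩, fun i => ⟨hk1 i, by have := hkN i; omega⟩⟩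

lemma fterm_support (hm2 : ∀ k : ℤ, k ≤ -2 → α k = 0) {N : ℤ} {m : ℕ} :
    ∀ p ∉ bigset N m, fterm α N m p = 0 := by
  intro p hp
  rw [fterm]
  split_ifs with h
  · by_contra hne
    exact hp (support_aux hm2 h.1 h.2.1 h.2.2.1 h.2.2.2 hne)
  · rfl

lemma summable_fterm (hm2 : ∀ k : ℤ, k ≤ -2 → α k = 0) (N : ℤ) (m : ℕ) :
    Summable (fterm α N m) :=
  summable_of_ne_finset_zero (s := bigset N m) (fterm_support hm2)

lemma T_nonpos (hm2 : ∀ k : ℤ, k ≤ -2 → α k = 0) {N : ℤ} (hN : N ≤ 0) (m : ℕ) :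
    T α N m = 0 := by
  have h : ∀ p : Idx, fterm α N m p = 0 := by
    intro p
    rw [fterm]
    split_ifs with h
    · obtain ⟨h1, h2, h3, h4⟩ := h
      apply Finset.prod_eq_zero (Finset.mem_univ (0 : Fin (p.1 + 1)))
      rcases lt_or_ge (p.2.2 0) (-1) with hc | hc
      · rw [hm2 _ (by omega)]; ring
      · have ha := h1 0
        rw [hm2 (p.2.2 0 - (p.2.1 0 : ℤ)) (by omega)]
        simp
    · rfl
  rw [T, tsum_congr h, tsum_zero]

lemma T_m_zero (N : ℤ) : T α N 0 = 0 := by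
  have h : ∀ p : Idx, fterm α N 0 p = 0 := by
    intro p
    rw [fterm]
    split_ifs with h
    · obtain ⟨h1, h2, h3, h4⟩ := h
      have := Finset.single_le_sum (f := p.2.1) (fun i _ => Nat.zero_le _)
        (Finset.mem_univ (0 : Fin (p.1 + 1)))
      have := h1 0
      omega
    · rfl
  rw [T, tsum_congr h, tsum_zero]

noncomputable def gterm (α : ℤ → ℂ) (N : ℤ) (m : ℕ) (p : Idx) : ℂ :=
  if (∀ i, 1 ≤ p.2.1 i) ∧ (∑ i, p.2.1 i) = m ∧ p.2.2 0 = N ∧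
      (∀ i : Fin p.1, p.2.2 i.succ < p.2.2 i.castSucc - (p.2.1 i.castSucc : ℤ))
  then ∏ i, α (p.2.2 i) * (starRingEnd ℂ) (α (p.2.2 i - (p.2.1 i : ℤ)))
  else 0

variable {α : ℤ → ℂ}

lemma gterm_eq_sub (N : ℤ) (m : ℕ) (p : Idx) :
    gterm α N m p = fterm α (N + 1) m p - fterm α N m p := by
  rw [gterm, fterm, fterm]
  by_cases hA : (∀ i, 1 ≤ p.2.1 i) ∧ (∑ i, p.2.1 i) = m ∧
      (∀ i : Fin p.1, p.2.2 i.succ < p.2.2 i.castSucc - (p.2.1 i.castSucc : ℤ))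
  · obtain ⟨h1, h2, h4⟩ := hA
    rcases lt_trichotomy (p.2.2 0) N with hk | hk | hk
    · rw [if_neg (by rintro ⟨-, -, h, -⟩; omega), if_pos ⟨h1, h2, by omega, h4⟩,
        if_pos ⟨h1, h2, hk, h4⟩]
      ring
    · rw [if_pos ⟨h1, h2, hk, h4⟩, if_pos ⟨h1, h2, by omega, h4⟩,
        if_neg (by rintro ⟨-, -, h, -⟩; omega)]
      ring
    · rw [if_neg (by rintro ⟨-, -, h, -⟩; omega), if_neg (by rintro ⟨-, -, h, -⟩; omega),
        if_neg (by rintro ⟨-, -, h, -⟩; omega)]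
      ring
  · rw [if_neg (by rintro ⟨x1, x2, -, x4⟩; exact hA ⟨x1, x2, x4⟩),
      if_neg (by rintro ⟨x1, x2, -, x4⟩; exact hA ⟨x1, x2, x4⟩),
      if_neg (by rintro ⟨x1, x2, -, x4⟩; exact hA ⟨x1, x2, x4⟩)]
    ring
noncomputable def g0 (α : ℤ → ℂ) (N : ℤ) (m : ℕ) (p : Idx) : ℂ :=
  if p.1 = 0 then gterm α N m p else 0
noncomputable def g1 (α : ℤ → ℂ) (N : ℤ) (m : ℕ) (p : Idx) : ℂ :=
  if p.1 = 0 then 0 else gterm α N m p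

def phi : (ℕ × ℤ) × Idx → Idx :=
  fun x => ⟨x.2.1 + 1, Fin.cons x.1.1 x.2.2.1, Fin.cons x.1.2 x.2.2.2⟩

variable {α : ℤ → ℂ}

lemma phi_inj : Function.Injective phi := by
  rintro ⟨⟨a, k⟩, ⟨j, b, l⟩⟩ ⟨⟨a', k'⟩, ⟨j', b', l'⟩⟩ h
  simp only [phi] at h
  obtain hj : j = j' := by
    have := congrArg Sigma.fst h
    simpa using this
  subst hj
  injection h with h1 h2
  have hab := congrArg Prod.fst h2
  have hkl := congrArg Prod.snd h2
  simp only at hab hkl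
  have ha : a = a' := by simpa using congrFun hab 0
  have hk : k = k' := by simpa using congrFun hkl 0
  have hb : b = b' := by
    funext i
    simpa using congrFun hab i.succ
  have hl : l = l' := by
    funext i
    simpa using congrFun hkl i.succ
  subst ha hk hb hl
  rfl

lemma g1_phi (N : ℤ) (m : ℕ) (a : ℕ) (k : ℤ) (q : Idx) :
    g1 α N m (phi ((a, k), q)) =
      if k = N ∧ 1 ≤ a then
        α N * (starRingEnd ℂ) (α (N - a)) * fterm α (N - a) (m - a) q
      else 0 := by
  obtain ⟨j, b, l⟩ := q
  rw [g1, if_neg (by simp [phi])]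
  show gterm α N m ⟨j + 1, Fin.cons a b, Fin.cons k l⟩ = _
  have e1 : (∀ i : Fin (j + 1 + 1), 1 ≤ (Fin.cons a b : Fin (j+1+1) → ℕ) i) ↔ (1 ≤ a ∧ ∀ i, 1 ≤ b i) := by
    rw [Fin.forall_fin_succ]
    simp only [Fin.cons_zero, Fin.cons_succ]
  have e2 : (∑ i, (Fin.cons a b : Fin (j+1+1) → ℕ) i) = a + ∑ i, b i := Fin.sum_cons a b
  have e3 : (∀ i : Fin (j + 1), (Fin.cons k l : Fin (j+1+1) → ℤ) i.succ <
      (Fin.cons k l : Fin (j+1+1) → ℤ) i.castSucc - ((Fin.cons a b : Fin (j+1+1) → ℕ) i.castSucc : ℤ)) ↔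
      (l 0 < k - a ∧ ∀ i : Fin j, l i.succ < l i.castSucc - (b i.castSucc : ℤ)) := by
    rw [Fin.forall_fin_succ]
    simp only [Fin.cons_succ, Fin.castSucc_zero, Fin.cons_zero, ← Fin.succ_castSucc]
  have e4 : (∏ i : Fin (j + 1 + 1),
        α ((Fin.cons k l : Fin (j+1+1) → ℤ) i) * (starRingEnd ℂ) (α ((Fin.cons k l : Fin (j+1+1) → ℤ) i - ((Fin.cons a b : Fin (j+1+1) → ℕ) i : ℤ)))) =
      (α k * (starRingEnd ℂ) (α (k - a))) *
        ∏ i : Fin (j + 1), α (l i) * (starRingEnd ℂ) (α (l i - (b i : ℤ))) := by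
    rw [Fin.prod_univ_succ]
    simp only [Fin.cons_zero, Fin.cons_succ]
  rw [gterm, fterm]
  simp only [e2, e4, Fin.cons_zero]
  simp only [e1, e3]
  split_ifs with hL hC hF hC hF
  · obtain ⟨rfl, -⟩ := hC
    ring
  · exfalso
    obtain ⟨⟨ha, hb⟩, hs, rfl, hl0, hch⟩ := hL
    exact hF ⟨hb, by omega, by omega, hch⟩
  · exact absurd ⟨hL.2.2.1, hL.1.1⟩ hC
  · exfalso
    obtain ⟨rfl, ha⟩ := hC
    obtain ⟨hb, hs, hl0, hch⟩ := hF
    have hbs : 1 ≤ ∑ i, b i :=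
      le_trans (hb 0) (Finset.single_le_sum (f := b) (fun i _ => Nat.zero_le _)
        (Finset.mem_univ 0))
    exact hL ⟨⟨ha, hb⟩, by omega, rfl, by omega, hch⟩
  · ring
  · rfl



lemma gterm_support (hm2 : ∀ k : ℤ, k ≤ -2 → α k = 0) {N : ℤ} {m : ℕ} :
    ∀ p ∉ bigset (N + 1) m, gterm α N m p = 0 := by
  intro p hp
  rw [gterm]
  split_ifs with h
  · by_contra hne
    exact hp (support_aux hm2 h.1 h.2.1 (by have := h.2.2.1; omega) h.2.2.2 hne)
  · rfl

lemma summable_g0 (hm2 : ∀ k : ℤ, k ≤ -2 → α k = 0) (N : ℤ) (m : ℕ) :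
    Summable (g0 α N m) := by
  apply summable_of_ne_finset_zero (s := bigset (N + 1) m)
  intro p hp
  rw [g0]
  split_ifs
  · exact gterm_support hm2 p hp
  · rfl

lemma summable_g1 (hm2 : ∀ k : ℤ, k ≤ -2 → α k = 0) (N : ℤ) (m : ℕ) :
    Summable (g1 α N m) := by
  apply summable_of_ne_finset_zero (s := bigset (N + 1) m)
  intro p hp
  rw [g1]
  split_ifs
  · rfl
  · exact gterm_support hm2 p hp

lemma tsum_g0 (N : ℤ) {m : ℕ} (hm : 1 ≤ m) :
    ∑' p : Idx, g0 α N m p = α N * (starRingEnd ℂ) (α (N - m)) := by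
  rw [tsum_eq_single (⟨0, fun _ => m, fun _ => N⟩ : Idx) ?h]
  case h =>
    rintro ⟨j, a, k⟩ hne
    rw [g0]
    split_ifs with hj
    · simp only at hj
      subst hj
      rw [gterm]
      split_ifs with h
      · obtain ⟨h1, h2, h3, h4⟩ := h
        simp only at h1 h2 h3 h4
        exfalso
        have ha : a = fun _ => m := by
          funext i
          have h20 : a 0 = m := by simpa using h2
          rw [Fin.eq_zero i, h20]
        have hk : k = fun _ => N := by
          funext i
          rw [Fin.eq_zero i, h3]
        subst ha hk
        exact hne rfl
      · rfl
    · rfl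
  · rw [g0, if_pos rfl, gterm,
      if_pos ⟨fun _ => hm, by simp, rfl, fun i => Fin.elim0 i⟩]
    simp

lemma tsum_g1 (hm2 : ∀ k : ℤ, k ≤ -2 → α k = 0) (N : ℤ) (m : ℕ) :
    ∑' p : Idx, g1 α N m p =
      ∑ a ∈ Finset.Ico 1 m, α N * (starRingEnd ℂ) (α (N - a)) * T α (N - a) (m - a) := by
  have hs1 : Summable (g1 α N m) := summable_g1 hm2 N m
  have hcomp : Summable fun x : (ℕ × ℤ) × Idx => g1 α N m (phi x) :=
    hs1.comp_injective phi_inj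
  rw [← phi_inj.tsum_eq (f := g1 α N m) ?hsupp]
  case hsupp =>
    rintro p hp
    simp only [Function.mem_support] at hp
    obtain ⟨j, a, k⟩ := p
    match j with
    | 0 => exact absurd (by rw [g1, if_pos rfl]) hp
    | j + 1 =>
      exact ⟨((a 0, k 0), ⟨j, Fin.tail a, Fin.tail k⟩), by
        simp [phi, Fin.cons_self_tail]⟩
  rw [Summable.tsum_prod' hcomp (fun b => hcomp.comp_injective
    (fun x y hxy => by simpa using congrArg Prod.snd hxy))]
  have hinner : ∀ b : ℕ × ℤ, (∑' q : Idx, g1 α N m (phi (b, q))) =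
      if b.2 = N ∧ 1 ≤ b.1 then
        α N * (starRingEnd ℂ) (α (N - b.1)) * T α (N - b.1) (m - b.1)
      else 0 := by
    intro b
    rw [tsum_congr (fun q => g1_phi N m b.1 b.2 q)]
    split_ifs with hb
    · rw [tsum_mul_left, T]
    · simp
  rw [tsum_congr hinner, tsum_eq_sum (s := (Finset.Ico 1 m) ×ˢ ({N} : Finset ℤ)) ?hv]
  case hv =>
    intro b hb
    split_ifs with hc
    · obtain ⟨hc1, hc2⟩ := hc
      simp only [Finset.mem_product, Finset.mem_Ico, Finset.mem_singleton] at hb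
      have hbm : m ≤ b.1 := by omega
      rw [show m - b.1 = 0 by omega, T_m_zero, mul_zero]
    · rfl
  rw [Finset.sum_product]
  apply Finset.sum_congr rfl
  intro a ha
  rw [Finset.sum_singleton, if_pos ⟨rfl, (Finset.mem_Ico.1 ha).1⟩]

lemma T_rec (hm2 : ∀ k : ℤ, k ≤ -2 → α k = 0) (N : ℤ) {m : ℕ} (hm : 1 ≤ m) :
    T α (N + 1) m = T α N m + α N * (starRingEnd ℂ) (α (N - m)) +
      ∑ a ∈ Finset.Ico 1 m, α N * (starRingEnd ℂ) (α (N - a)) * T α (N - a) (m - a) := by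
  have sf1 := summable_fterm hm2 (N + 1) m
  have sf0 := summable_fterm hm2 N m
  have hT : ∑' p : Idx, gterm α N m p = T α (N + 1) m - T α N m := by
    rw [tsum_congr (gterm_eq_sub N m)]
    exact Summable.tsum_sub sf1 sf0
  have hsplit : ∀ p : Idx, gterm α N m p = g0 α N m p + g1 α N m p := by
    intro p
    rw [g0, g1]
    split_ifs <;> ring
  have h2 : ∑' p : Idx, gterm α N m p = (∑' p : Idx, g0 α N m p) + ∑' p : Idx, g1 α N m p := by
    rw [tsum_congr hsplit]
    exact Summable.tsum_add (summable_g0 hm2 N m) (summable_g1 hm2 N m)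
  rw [tsum_g0 N hm, tsum_g1 hm2 N m] at h2
  rw [h2] at hT
  linear_combination -hT


lemma psi0 (Φ Ψ : ℕ → Polynomial ℂ) (h0' : Ψ 0 = 1)
    (hrec' : ∀ n : ℕ, Ψ (n + 1) = Ψ n - C (α n) * X * Φ n) :
    ∀ n : ℕ, (Ψ n).coeff 0 = 1 := by
  intro n
  induction n with
  | zero => simp [h0']
  | succ n ih =>
    rw [hrec' n, coeff_sub, mul_assoc, coeff_C_mul, mul_coeff_zero, coeff_X_zero, ih]
    ring

lemma main (hm1 : α (-1) = -1) (hm2 : ∀ k : ℤ, k ≤ -2 → α k = 0)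
    (Φ Ψ : ℕ → Polynomial ℂ) (h0 : Φ 0 = 1) (h0' : Ψ 0 = 1)
    (hrec : ∀ n : ℕ, Φ (n + 1) = X * Φ n - C ((starRingEnd ℂ) (α n)) * Ψ n)
    (hrec' : ∀ n : ℕ, Ψ (n + 1) = Ψ n - C (α n) * X * Φ n) :
    ∀ n : ℕ,
      (∀ m : ℕ, 1 ≤ m → (Ψ n).coeff m = T α n m) ∧
      (∀ k : ℕ, (Φ n).coeff k = -((starRingEnd ℂ) (α ((n : ℤ) - k - 1))) -
        ∑ a ∈ Finset.range k,
          (starRingEnd ℂ) (α ((n : ℤ) - a - 1)) * T α ((n : ℤ) - a - 1) (k - a)) := by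
  intro n
  induction n with
  | zero =>
    constructor
    · intro m hm
      rw [h0', T_nonpos hm2 (by norm_num) m, Polynomial.coeff_one, if_neg (by omega)]
    · intro k
      rw [h0]
      by_cases hk : k = 0
      · subst hk
        rw [Finset.range_zero, Finset.sum_empty, Polynomial.coeff_one, if_pos rfl]
        norm_num [hm1]
      · rw [Finset.sum_eq_zero (fun a _ => by
          rw [T_nonpos hm2 (by push_cast; omega) _, mul_zero]),
          hm2 _ (by push_cast; omega), Polynomial.coeff_one, if_neg (by omega)]
        simp
  | succ n ih =>
    obtain ⟨ihA, ihB⟩ := ih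
    have hpsi0 : (Ψ n).coeff 0 = 1 := psi0 Φ Ψ h0' hrec' n
    constructor
    · intro m hm
      obtain ⟨m', rfl⟩ : ∃ m', m = m' + 1 := ⟨m - 1, by omega⟩
      rw [hrec' n, coeff_sub, mul_assoc, coeff_C_mul, coeff_X_mul]
      rw [ihA (m' + 1) (by omega), ihB m']
      have hTr := T_rec (α := α) hm2 (n : ℤ) (m := m' + 1) (by omega)
      rw [Finset.sum_Ico_eq_sum_range] at hTr
      rw [show ((n + 1 : ℕ) : ℤ) = (n : ℤ) + 1 by push_cast; ring, hTr]
      rw [show m' + 1 - 1 = m' from rfl]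
      have hsum : (∑ a ∈ Finset.range m', α n * (starRingEnd ℂ) (α ((n:ℤ) - (1 + a : ℕ))) *
            T α ((n:ℤ) - (1 + a : ℕ)) (m' + 1 - (1 + a))) =
          ∑ a ∈ Finset.range m', α n * ((starRingEnd ℂ) (α ((n:ℤ) - a - 1)) *
            T α ((n:ℤ) - a - 1) (m' - a)) := by
        apply Finset.sum_congr rfl
        intro a _
        rw [show ((n:ℤ) - ((1 + a : ℕ) : ℤ)) = (n:ℤ) - a - 1 by push_cast; ring,
          show m' + 1 - (1 + a) = m' - a by omega]
        ring
      rw [hsum, ← Finset.mul_sum,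
        show ((n:ℤ) - ((m' + 1 : ℕ) : ℤ)) = (n:ℤ) - m' - 1 by push_cast; ring]
      ring
    · intro k
      cases k with
      | zero =>
        rw [hrec n, coeff_sub, coeff_C_mul, mul_coeff_zero, coeff_X_zero, hpsi0]
        rw [Finset.range_zero, Finset.sum_empty,
          show ((n + 1 : ℕ) : ℤ) - (0 : ℕ) - 1 = (n : ℤ) by push_cast; ring]
        ring
      | succ k' =>
        rw [hrec n, coeff_sub, coeff_X_mul, coeff_C_mul, ihB k', ihA (k' + 1) (by omega)]
        rw [Finset.sum_range_succ' (fun a => (starRingEnd ℂ) (α (((n+1:ℕ):ℤ) - a - 1)) *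
          T α (((n+1:ℕ):ℤ) - a - 1) (k' + 1 - a)) k']
        have hsum : (∑ a ∈ Finset.range k', (starRingEnd ℂ) (α (((n+1:ℕ):ℤ) - ((a+1:ℕ):ℤ) - 1)) *
            T α (((n+1:ℕ):ℤ) - ((a+1:ℕ):ℤ) - 1) (k' + 1 - (a+1))) =
          ∑ a ∈ Finset.range k', (starRingEnd ℂ) (α ((n:ℤ) - a - 1)) *
            T α ((n:ℤ) - a - 1) (k' - a) := by
          apply Finset.sum_congr rfl
          intro a _
          rw [show (((n+1:ℕ):ℤ) - ((a+1:ℕ):ℤ) - 1) = (n:ℤ) - a - 1 by push_cast; ring,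
            show k' + 1 - (a+1) = k' - a by omega]
        rw [hsum,
          show (((n+1:ℕ):ℤ) - ((0:ℕ):ℤ) - 1) = (n:ℤ) by push_cast; ring,
          show (((n+1:ℕ):ℤ) - ((k'+1:ℕ):ℤ) - 1) = (n:ℤ) - k' - 1 by push_cast; ring,
          show k' + 1 - 0 = k' + 1 from rfl]
        ring

end LambdaAux


/-- Theorem 1.1: for `m ≥ 1`, the coefficient `λ_{n,m}` of `z^m` in `Φ_n^*` equals the
sum, over ordered compositions `(a_1,…,a_j)` of `m` into positive parts and integer
tuples `k_1 < n`, `k_{i+1} < k_i - a_i`, of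
`α_{k_1} conj(α_{k_1-a_1}) ⋯ α_{k_j} conj(α_{k_j-a_j})`, with the conventions
`α_{-1} = -1` and `α_k = 0` for `k ≤ -2`.  The sum is expressed as a `tsum` over the
countable index type of tuples (only finitely many terms are nonzero). -/
theorem lambda_formula (α : ℤ → ℂ) (hα : ∀ n : ℤ, 0 ≤ n → ‖α n‖ < 1)
    (hm1 : α (-1) = -1) (hm2 : ∀ k : ℤ, k ≤ -2 → α k = 0)
    (Φ Ψ : ℕ → Polynomial ℂ) (h0 : Φ 0 = 1) (h0' : Ψ 0 = 1)
    (hrec : ∀ n : ℕ, Φ (n + 1) = X * Φ n - C ((starRingEnd ℂ) (α n)) * Ψ n)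
    (hrec' : ∀ n : ℕ, Ψ (n + 1) = Ψ n - C (α n) * X * Φ n) :
    ∀ (n : ℕ) (m : ℕ), 1 ≤ m →
      (Ψ n).coeff m =
        ∑' p : Σ j : ℕ, (Fin (j + 1) → ℕ) × (Fin (j + 1) → ℤ),
          if (∀ i, 1 ≤ p.2.1 i) ∧ (∑ i, p.2.1 i) = m ∧ p.2.2 0 < (n : ℤ) ∧
              (∀ i : Fin p.1, p.2.2 i.succ < p.2.2 i.castSucc - (p.2.1 i.castSucc : ℤ))
          then ∏ i, α (p.2.2 i) * (starRingEnd ℂ) (α (p.2.2 i - (p.2.1 i : ℤ)))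
          else 0 := by
  intro n m hm
  rw [(LambdaAux.main hm1 hm2 Φ Ψ h0 h0' hrec hrec' n).1 m hm]
  rfl
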